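/- In the *-algebra A(S⁷_q) generated by x₁,…,x₄, x̄¹,…,x̄⁴ with the symplectic commutation relations and sphere relation Σ x̄ⁱxᵢ = 1, the 4×2 matrix Ψ with columns |φ₁⟩ = (q⁻³x₁, −q⁻¹x̄², q⁻¹x₃, −x̄⁴)ᵗ and |φ₂⟩ = (q⁻²x₂, q⁻¹x̄¹, −x₄, −x̄³)ᵗ satisfies Ψ*Ψ = 𝕀₂, i.e. ⟨φ₁,φ₁⟩ = ⟨φ₂,φ₂⟩ = 1 and ⟨φ₁,φ₂⟩ = 0. -/
import Mathlib


/-- In the `*`-algebra `A(S⁷_q)` generated by `x₁,…,x₄` and their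
conjugates `x̄ⁱ = star xᵢ`, with the symplectic commutation relations and the
sphere relation `Σ x̄ⁱxᵢ = 1`, the 4×2 matrix `Ψ` with columns
`|φ₁⟩ = (q⁻³x₁, −q⁻¹x̄², q⁻¹x₃, −x̄⁴)ᵗ` and `|φ₂⟩ = (q⁻²x₂, q⁻¹x̄¹, −x₄, −x̄³)ᵗ`
satisfies `Ψ*Ψ = 𝕀₂`: `⟨φ₁,φ₁⟩ = ⟨φ₂,φ₂⟩ = 1` and `⟨φ₁,φ₂⟩ = 0`. -/
theorem stmt_15 (q : ℝ) (hq0 : 0 < q) (hq1 : q < 1)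
    (R : Type*) [Ring R] [StarRing R] [Algebra ℝ R] [StarModule ℝ R]
    (x : Fin 4 → R)
    (h12 : x 0 * x 1 = q • (x 1 * x 0))
    (h13 : x 0 * x 2 = q • (x 2 * x 0))
    (h24 : x 1 * x 3 = q • (x 3 * x 1))
    (h34 : x 2 * x 3 = q • (x 3 * x 2))
    (h41 : x 3 * x 0 = q⁻¹ ^ 2 • (x 0 * x 3))
    (h32 : x 2 * x 1 = q⁻¹ ^ 2 • (x 1 * x 2) + (q⁻¹ ^ 2 * (q⁻¹ - q)) • (x 0 * x 3))
    (m11 : x 0 * star (x 0) = star (x 0) * x 0)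
    (m12 : x 0 * star (x 1) = q⁻¹ • (star (x 1) * x 0))
    (m13 : x 0 * star (x 2) = q⁻¹ • (star (x 2) * x 0))
    (m14 : x 0 * star (x 3) = q⁻¹ ^ 2 • (star (x 3) * x 0))
    (m22 : x 1 * star (x 1) = star (x 1) * x 1 + (1 - q⁻¹ ^ 2) • (star (x 0) * x 0))
    (m23 : x 1 * star (x 2) = q⁻¹ ^ 2 • (star (x 2) * x 1))
    (m24 : x 1 * star (x 3)
      = q⁻¹ • (star (x 3) * x 1) + (q⁻¹ * (q⁻¹ ^ 2 - 1)) • (star (x 2) * x 0))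
    (m33 : x 2 * star (x 2) = star (x 2) * x 2
      + (1 - q⁻¹ ^ 2) • (star (x 0) * x 0 + (1 + q⁻¹ ^ 2) • (star (x 1) * x 1)))
    (m34 : x 2 * star (x 3)
      = q⁻¹ • (star (x 3) * x 2) + ((1 - q⁻¹ ^ 2) * q⁻¹ ^ 3) • (star (x 1) * x 0))
    (m44 : x 3 * star (x 3) = star (x 3) * x 3
      + (1 - q⁻¹ ^ 2) • ((1 + q⁻¹ ^ 4) • (star (x 0) * x 0)
          + star (x 1) * x 1 + star (x 2) * x 2))
    (hsph : ∑ i, star (x i) * x i = 1)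
    (φ₁ φ₂ : Fin 4 → R)
    (hφ₁ : φ₁ = ![q⁻¹ ^ 3 • x 0, -(q⁻¹ • star (x 1)), q⁻¹ • x 2, -star (x 3)])
    (hφ₂ : φ₂ = ![q⁻¹ ^ 2 • x 1, q⁻¹ • star (x 0), -x 3, -star (x 2)]) :
    (∑ j, star (φ₁ j) * φ₁ j) = 1 ∧
    (∑ j, star (φ₂ j) * φ₂ j) = 1 ∧
    (∑ j, star (φ₁ j) * φ₂ j) = 0 := by
  have s12 : x 1 * star (x 0) = q⁻¹ • (star (x 0) * x 1) := by
    have := congrArg star m12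
    simpa [star_smul, star_mul, star_star, mul_comm] using this
  have s34 : x 3 * star (x 2)
      = q⁻¹ • (star (x 2) * x 3) + ((1 - q⁻¹ ^ 2) * q⁻¹ ^ 3) • (star (x 0) * x 1) := by
    have := congrArg star m34
    simpa [star_smul, star_mul, star_star, star_add, mul_comm] using this
  subst hφ₁ hφ₂
  rw [← hsph]
  refine ⟨?_, ?_, ?_⟩ <;>
    simp only [Fin.sum_univ_four, Matrix.cons_val_zero, Matrix.cons_val_one,
      Matrix.head_cons, Matrix.cons_val_two, Matrix.tail_cons, Matrix.cons_val_three,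
      star_smul, star_neg, star_star, star_trivial, neg_mul, mul_neg, neg_neg,
      smul_mul_assoc, mul_smul_comm, smul_smul, smul_add, smul_neg]
  · rw [m22, m44]; module
  · rw [m11, m33]; module
  · rw [s12, s34]
    module
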